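/- The Shannon sampling series diverges strongly on PW^1_π: there exists a function f₁ ∈ PW^1_π such that lim_{N→∞} sup_{t∈ℝ} |(S_N f₁)(t)| = ∞ (the full limit, not merely the limsup, is infinite). -/

import Mathlib

open MeasureTheory Filter Topology Real Complex
open scoped ENNReal NNReal

noncomputable section

/-- The normalized sinc function `sin(πx)/(πx)` (with value `1` at `x = 0`). -/
def sincπ (x : ℝ) : ℝ := if x = 0 then 1 else Real.sin (π * x) / (π * x)

/-- `f` belongs to the Paley–Wiener space `PW^p_σ`: it is the inverse Fourier
transform of some `g ∈ L^p([-σ, σ])`. -/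
def IsPW (p : ℝ≥0∞) (σ : ℝ) (f : ℂ → ℂ) : Prop :=
  ∃ g : ℝ → ℂ, MemLp g p (volume.restrict (Set.Icc (-σ) σ)) ∧
    ∀ z : ℂ, f z = ((1 / (2 * π) : ℝ) : ℂ) *
      ∫ ω in Set.Icc (-σ) σ, g ω * Complex.exp (Complex.I * (ω : ℂ) * z)

/-- The symmetric partial sum of degree `N` of the Shannon sampling series. -/
def shannonSum (f : ℂ → ℂ) (N : ℕ) (t : ℝ) : ℂ :=
  ∑ n ∈ Finset.Icc (-(N : ℤ)) (N : ℤ), f (n : ℂ) * ((sincπ (t - n) : ℝ) : ℂ)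


def mseq (k : ℕ) : ℕ := 2 ^ (4 ^ k)
def bb (k : ℕ) : ℝ≥0 := (1/2 : ℝ≥0) ^ k
def Dker (m : ℕ) (θ : ℝ) : ℂ := ∑ j ∈ Finset.range (m+1), Complex.exp (Complex.I * j * θ)
def Fej (m : ℕ) (θ : ℝ) : ℝ≥0 := ‖Dker m θ‖₊ ^ 2 / (m+1)

lemma neg_one_zpow_neg (n : ℤ) : ((-1 : ℂ)) ^ (-n) = (-1 : ℂ) ^ n := by
  rcases Int.even_or_odd n with h | h
  · rw [h.neg.neg_one_zpow, h.neg_one_zpow]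
  · rw [(h.neg).neg_one_zpow, h.neg_one_zpow]

lemma exp_int_pi (a : ℤ) : Complex.exp ((a : ℂ) * (π * Complex.I)) = (-1 : ℂ) ^ a := by
  rw [Complex.exp_int_mul, Complex.exp_pi_mul_I]

lemma integralA (a : ℤ) :
    ∫ ω in Set.Icc (-π : ℝ) π, Complex.exp ((a : ℂ) * ω * Complex.I)
      = if a = 0 then ((2 * π : ℝ) : ℂ) else 0 := by
  rw [MeasureTheory.integral_Icc_eq_integral_Ioc,
    ← intervalIntegral.integral_of_le (by linarith [pi_pos] : (-π:ℝ) ≤ π)]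
  rcases eq_or_ne a 0 with rfl | ha
  · simp only [Int.cast_zero, zero_mul, Complex.exp_zero, if_pos rfl]
    rw [intervalIntegral.integral_const, Complex.real_smul]
    push_cast
    ring
  · rw [if_neg ha]
    have h1 : ∀ ω : ℝ, (a : ℂ) * ω * Complex.I = ((a : ℂ) * Complex.I) * ω := by
      intro ω; ring
    simp_rw [h1]
    rw [integral_exp_mul_complex (by simp [ha, Complex.I_ne_zero])]
    have h2 : (a : ℂ) * Complex.I * π = (a : ℂ) * (π * Complex.I) := by ring
    have h3 : (a : ℂ) * Complex.I * (-π : ℝ) = ((-a : ℤ) : ℂ) * (π * Complex.I) := by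
      push_cast; ring
    rw [h2, h3, exp_int_pi, exp_int_pi, neg_one_zpow_neg, sub_self, zero_div]

lemma FejC (m : ℕ) (θ : ℝ) :
    ((Fej m θ : ℝ≥0) : ℂ) = Dker m θ * (starRingEnd ℂ) (Dker m θ) / (m+1) := by
  rw [Complex.mul_conj]
  unfold Fej
  push_cast
  rw [Complex.normSq_eq_norm_sq]
  norm_num

lemma Dker_conj (m : ℕ) (θ : ℝ) :
    (starRingEnd ℂ) (Dker m θ) = ∑ l ∈ Finset.range (m+1), Complex.exp (-(Complex.I * l * θ)) := by
  unfold Dker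
  rw [map_sum]
  refine Finset.sum_congr rfl fun l _ => ?_
  rw [← Complex.exp_conj]
  congr 1
  simp [Complex.conj_I]

lemma continuous_Dker (m : ℕ) : Continuous (Dker m) := by
  unfold Dker
  exact continuous_finset_sum _ fun j _ => Complex.continuous_exp.comp (by fun_prop)

lemma continuous_FejC (m : ℕ) : Continuous fun θ : ℝ => ((Fej m θ : ℝ≥0) : ℂ) := by
  simp only [FejC]
  exact ((continuous_Dker m).mul (Complex.continuous_conj.comp (continuous_Dker m))).div_const _

def cnt (m : ℕ) (n : ℤ) : ℕ :=
  (((Finset.range (m+1)) ×ˢ (Finset.range (m+1))).filter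
    (fun p => (p.2 : ℤ) = (p.1 : ℤ) + n)).card

lemma integralB (m : ℕ) (n : ℤ) :
    ∫ ω in Set.Icc (-π : ℝ) π, ((Fej m (ω + π) : ℝ≥0) : ℂ) * Complex.exp (Complex.I * ω * n)
      = (-1 : ℂ) ^ n * ((2 * π : ℝ) : ℂ) * (cnt m n) / (m + 1) := by
  have hpt : ∀ ω : ℝ, ((Fej m (ω + π) : ℝ≥0) : ℂ) * Complex.exp (Complex.I * ω * n)
      = (∑ p ∈ (Finset.range (m+1)) ×ˢ (Finset.range (m+1)),
          Complex.exp ((((p.1 : ℤ) - p.2 : ℤ) : ℂ) * (π * Complex.I)) *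
            Complex.exp ((((p.1 : ℤ) - p.2 + n : ℤ) : ℂ) * ω * Complex.I)) / (m + 1) := by
    intro ω
    rw [FejC, Dker_conj]
    unfold Dker
    rw [div_mul_eq_mul_div]
    congr 1
    rw [Finset.sum_mul_sum, Finset.sum_mul]
    rw [Finset.sum_product]
    refine Finset.sum_congr rfl fun j _ => ?_
    rw [Finset.sum_mul]  -- maybe not needed
    refine Finset.sum_congr rfl fun l _ => ?_
    rw [← Complex.exp_add, ← Complex.exp_add, ← Complex.exp_add]
    congr 1
    push_cast
    ring
  simp_rw [hpt]
  rw [integral_div]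
  rw [MeasureTheory.integral_finset_sum _ (fun p _ => by
    apply Continuous.integrableOn_Icc
    exact continuous_const.mul (Complex.continuous_exp.comp (by fun_prop)))]
  have hterm : ∀ p ∈ (Finset.range (m+1)) ×ˢ (Finset.range (m+1)),
      (∫ ω in Set.Icc (-π : ℝ) π,
          Complex.exp ((((p.1 : ℤ) - p.2 : ℤ) : ℂ) * (π * Complex.I)) *
            Complex.exp ((((p.1 : ℤ) - p.2 + n : ℤ) : ℂ) * ω * Complex.I))
        = if (p.2 : ℤ) = (p.1 : ℤ) + n then (-1 : ℂ) ^ n * ((2 * π : ℝ) : ℂ) else 0 := by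
    intro p _
    rw [MeasureTheory.integral_const_mul, integralA]
    rcases eq_or_ne ((p.2 : ℤ)) ((p.1 : ℤ) + n) with h | h
    · rw [if_pos h, if_pos (by omega)]
      have h2 : ((p.1 : ℤ) - p.2 : ℤ) = -n := by omega
      rw [h2]
      push_cast
      rw [show (-(n:ℂ)) * ((π:ℂ) * Complex.I) = ((-n : ℤ) : ℂ) * ((π:ℂ) * Complex.I) by push_cast; ring,
        exp_int_pi, neg_one_zpow_neg]
    · rw [if_neg (by omega), if_neg h, mul_zero]
  rw [Finset.sum_congr rfl hterm, ← Finset.sum_filter, Finset.sum_const, nsmul_eq_mul]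
  unfold cnt
  ring

lemma cnt_le (m : ℕ) (n : ℤ) : cnt m n ≤ m + 1 := by
  have h := Finset.card_le_card_of_injOn (f := fun p : ℕ × ℕ => p.1)
    (s := ((Finset.range (m+1)) ×ˢ (Finset.range (m+1))).filter
      (fun p => (p.2 : ℤ) = (p.1 : ℤ) + n))
    (t := Finset.range (m+1))
    (by intro p hp
        simp only [Finset.mem_coe, Finset.mem_filter, Finset.mem_product] at hp
        exact hp.1.1)
    (by intro p hp q hq hpq
        simp only [Finset.mem_coe, Finset.mem_filter, Finset.mem_product] at hp hq
        have hp1 : p.1 = q.1 := hpq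
        have : p.2 = q.2 := by omega
        exact Prod.ext hp1 this)
  simpa [cnt] using h

lemma cnt_ge (m : ℕ) (n : ℤ) (hn : 0 ≤ n) : m + 1 - n.toNat ≤ cnt m n := by
  have h := Finset.card_le_card_of_injOn (f := fun j : ℕ => (j, j + n.toNat))
    (s := Finset.range (m + 1 - n.toNat))
    (t := ((Finset.range (m+1)) ×ˢ (Finset.range (m+1))).filter
      (fun p => (p.2 : ℤ) = (p.1 : ℤ) + n))
    (by intro j hj
        simp only [Finset.mem_coe, Finset.mem_range] at hj
        simp only [Finset.mem_coe, Finset.mem_filter, Finset.mem_product, Finset.mem_range]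
        refine ⟨⟨by omega, by omega⟩, ?_⟩
        push_cast [Int.toNat_of_nonneg hn]
        ring)
    (by intro a _ b _ hab
        exact (Prod.ext_iff.mp hab).1)
  simpa [cnt] using h

lemma cnt_zero (m : ℕ) : cnt m 0 = m + 1 :=
  le_antisymm (cnt_le m 0) (by simpa using cnt_ge m 0 le_rfl)

def blk (k : ℕ) (n : ℤ) (ω : ℝ) : ℂ :=
  (((bb k * Fej (mseq k) (ω + π) : ℝ≥0) : ℝ) : ℂ) * Complex.exp (Complex.I * ω * n)

lemma blk_eq (k : ℕ) (n : ℤ) (ω : ℝ) :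
    blk k n ω = ((bb k : ℝ) : ℂ) * (((Fej (mseq k) (ω + π) : ℝ≥0) : ℝ) : ℂ)
      * Complex.exp (Complex.I * ω * n) := by
  unfold blk; push_cast; ring

lemma continuous_blk (k : ℕ) (n : ℤ) : Continuous (blk k n) := by
  rw [show blk k n = fun ω : ℝ => ((bb k : ℝ) : ℂ) * (((Fej (mseq k) (ω + π) : ℝ≥0) : ℝ) : ℂ)
      * Complex.exp (Complex.I * ω * n) from funext (blk_eq k n)]
  exact (continuous_const.mul ((continuous_FejC (mseq k)).comp (by fun_prop))).mul
    (Complex.continuous_exp.comp (by fun_prop))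

lemma integrable_blk (k : ℕ) (n : ℤ) :
    IntegrableOn (blk k n) (Set.Icc (-π : ℝ) π) volume :=
  (continuous_blk k n).integrableOn_Icc

lemma integral_blk (k : ℕ) (n : ℤ) :
    ∫ ω in Set.Icc (-π : ℝ) π, blk k n ω
      = ((bb k : ℝ) : ℂ) * ((-1 : ℂ) ^ n * ((2 * π : ℝ) : ℂ) * (cnt (mseq k) n) / (mseq k + 1)) := by
  have hfun : ∀ ω : ℝ, blk k n ω = ((bb k : ℝ) : ℂ) *
      ((((Fej (mseq k) (ω + π) : ℝ≥0) : ℝ) : ℂ) * Complex.exp (Complex.I * ω * n)) := by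
    intro ω; rw [blk_eq]; ring
  rw [show blk k n = fun ω : ℝ => ((bb k : ℝ) : ℂ) *
      ((((Fej (mseq k) (ω + π) : ℝ≥0) : ℝ) : ℂ) * Complex.exp (Complex.I * ω * n)) from
    funext hfun]
  rw [MeasureTheory.integral_const_mul, integralB]

lemma nnnorm_blk (k : ℕ) (n : ℤ) (ω : ℝ) :
    ‖blk k n ω‖₊ = bb k * Fej (mseq k) (ω + π) := by
  unfold blk
  rw [nnnorm_mul]
  have h1 : Complex.exp (Complex.I * ω * n) = Complex.exp (((ω * n : ℝ) : ℂ) * Complex.I) := by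
    push_cast; ring_nf
  rw [h1]
  have h2 : ‖Complex.exp (((ω * n : ℝ) : ℂ) * Complex.I)‖₊ = 1 := by
    ext
    simpa using Complex.norm_exp_ofReal_mul_I (ω * n)
  rw [h2, mul_one]
  ext
  simp [Real.nnnorm_of_nonneg]

lemma integral_FejC (k : ℕ) :
    ∫ ω in Set.Icc (-π : ℝ) π, (((Fej (mseq k) (ω + π) : ℝ≥0) : ℝ) : ℂ) = ((2 * π : ℝ) : ℂ) := by
  have h := integralB (mseq k) 0
  simp only [Int.cast_zero, mul_zero, Complex.exp_zero, mul_one, zpow_zero, one_mul,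
    cnt_zero] at h
  rw [h]
  push_cast
  rw [mul_div_assoc, div_self (by exact_mod_cast Nat.succ_ne_zero (mseq k)), mul_one]

lemma integral_blk_nnnorm (k : ℕ) (n : ℤ) :
    ∫⁻ ω in Set.Icc (-π : ℝ) π, (‖blk k n ω‖₊ : ℝ≥0∞)
      = ENNReal.ofReal ((bb k : ℝ) * (2 * π)) := by
  simp only [← enorm_eq_nnnorm]; rw [← MeasureTheory.ofReal_integral_norm_eq_lintegral_enorm (integrable_blk k n)]
  congr 1
  have h1 : ∀ ω : ℝ, ‖blk k n ω‖ = (bb k : ℝ) * ((Fej (mseq k) (ω + π) : ℝ≥0) : ℝ) := by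
    intro ω
    have := nnnorm_blk k n ω
    calc ‖blk k n ω‖ = ((‖blk k n ω‖₊ : ℝ≥0) : ℝ) := rfl
    _ = _ := by rw [this]; push_cast; ring
  simp_rw [h1]
  rw [MeasureTheory.integral_const_mul]
  congr 1
  have h2 := integral_FejC k
  have h3 : ∫ ω in Set.Icc (-π : ℝ) π, (((Fej (mseq k) (ω + π) : ℝ≥0) : ℝ) : ℂ)
      = (((∫ ω in Set.Icc (-π : ℝ) π, ((Fej (mseq k) (ω + π) : ℝ≥0) : ℝ)) : ℝ) : ℂ) :=
    integral_ofReal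
  rw [h3] at h2
  exact_mod_cast h2

def Gfun (ω : ℝ) : ℝ≥0 := ∑' k, bb k * Fej (mseq k) (ω + π)
def gfun (ω : ℝ) : ℂ := ((Gfun ω : ℝ) : ℂ)
def ffun (z : ℂ) : ℂ := ((1 / (2 * π) : ℝ) : ℂ) *
  ∫ ω in Set.Icc (-π : ℝ) π, gfun ω * Complex.exp (Complex.I * ω * z)

lemma continuous_Fej (m : ℕ) : Continuous (Fej m) := by
  have h : Fej m = fun θ => ‖Dker m θ‖₊ ^ 2 * ((m : ℝ≥0) + 1)⁻¹ := by
    funext θ; rw [Fej, div_eq_mul_inv]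
  rw [h]
  exact ((continuous_nnnorm.comp (continuous_Dker m)).pow 2).mul continuous_const

lemma measurable_Gfun : Measurable Gfun := by
  apply Measurable.nnreal_tsum
  intro k
  exact (continuous_const.mul ((continuous_Fej (mseq k)).comp (by fun_prop))).measurable

lemma measurable_gfun : Measurable gfun := by
  apply Complex.measurable_ofReal.comp
  exact NNReal.continuous_coe.measurable.comp measurable_Gfun

lemma gfun_mul_exp (n : ℤ) (ω : ℝ) :
    gfun ω * Complex.exp (Complex.I * ω * n) = ∑' k, blk k n ω := by
  unfold gfun Gfun blk
  rw [NNReal.coe_tsum, Complex.ofReal_tsum, tsum_mul_right]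

lemma coe_bb (k : ℕ) : (bb k : ℝ≥0∞) = (2⁻¹ : ℝ≥0∞) ^ k := by
  rw [bb]
  push_cast
  norm_num

lemma sum_lint (n : ℤ) :
    ∑' k, ∫⁻ ω in Set.Icc (-π : ℝ) π, (‖blk k n ω‖₊ : ℝ≥0∞)
      = 2 * ENNReal.ofReal (2 * π) := by
  have h : ∀ k : ℕ, ∫⁻ ω in Set.Icc (-π : ℝ) π, (‖blk k n ω‖₊ : ℝ≥0∞)
      = (bb k : ℝ≥0∞) * ENNReal.ofReal (2 * π) := by
    intro k
    rw [integral_blk_nnnorm, ENNReal.ofReal_mul (by positivity), ENNReal.ofReal_coe_nnreal]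
  simp_rw [h, ENNReal.tsum_mul_right, coe_bb, ENNReal.tsum_geometric]
  congr 1
  rw [show (1 : ℝ≥0∞) - 2⁻¹ = 2⁻¹ by
    rw [ENNReal.sub_eq_of_eq_add (by norm_num)]; rw [ENNReal.inv_two_add_inv_two]]
  simp

lemma sum_lint_ne_top (n : ℤ) :
    ∑' k, ∫⁻ ω in Set.Icc (-π : ℝ) π, (‖blk k n ω‖₊ : ℝ≥0∞) ≠ ⊤ := by
  rw [sum_lint]
  exact ENNReal.mul_ne_top (by norm_num) ENNReal.ofReal_ne_top

lemma coe_nnreal_tsum_le {f : ℕ → ℝ≥0} : ((∑' k, f k : ℝ≥0) : ℝ≥0∞) ≤ ∑' k, (f k : ℝ≥0∞) := by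
  by_cases h : Summable f
  · rw [ENNReal.coe_tsum h]
  · rw [tsum_eq_zero_of_not_summable h]
    simp

lemma integrable_gfun : Integrable gfun (volume.restrict (Set.Icc (-π : ℝ) π)) := by
  refine ⟨measurable_gfun.aestronglyMeasurable, ?_⟩
  rw [HasFiniteIntegral]; simp only [enorm_eq_nnnorm]
  have h1 : ∀ ω : ℝ, (‖gfun ω‖₊ : ℝ≥0∞) = ((Gfun ω : ℝ≥0) : ℝ≥0∞) := by
    intro ω
    unfold gfun
    congr 1
    ext
    simp [Real.nnnorm_of_nonneg]
  simp_rw [h1]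
  have h2 : ∀ ω : ℝ, ((Gfun ω : ℝ≥0) : ℝ≥0∞) ≤ ∑' k, ((bb k * Fej (mseq k) (ω + π) : ℝ≥0) : ℝ≥0∞) :=
    fun ω => coe_nnreal_tsum_le
  calc ∫⁻ ω in Set.Icc (-π : ℝ) π, ((Gfun ω : ℝ≥0) : ℝ≥0∞)
      ≤ ∫⁻ ω in Set.Icc (-π : ℝ) π, ∑' k, ((bb k * Fej (mseq k) (ω + π) : ℝ≥0) : ℝ≥0∞) :=
        lintegral_mono h2
    _ = ∑' k, ∫⁻ ω in Set.Icc (-π : ℝ) π, ((bb k * Fej (mseq k) (ω + π) : ℝ≥0) : ℝ≥0∞) :=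
        lintegral_tsum (fun k =>
          ((continuous_const.mul ((continuous_Fej (mseq k)).comp (by fun_prop))).measurable.coe_nnreal_ennreal).aemeasurable)
    _ = ∑' k, ∫⁻ ω in Set.Icc (-π : ℝ) π, (‖blk k 0 ω‖₊ : ℝ≥0∞) := by
        congr 1; funext k; congr 1; funext ω; rw [nnnorm_blk]
    _ < ⊤ := lt_of_le_of_ne le_top (sum_lint_ne_top 0)

def cseq (n : ℤ) : ℝ := ∑' k, (bb k : ℝ) * cnt (mseq k) n / (mseq k + 1)

lemma cseq_term_nonneg (n : ℤ) (k : ℕ) : 0 ≤ (bb k : ℝ) * cnt (mseq k) n / (mseq k + 1) := by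
  positivity

lemma cseq_term_le (n : ℤ) (k : ℕ) :
    (bb k : ℝ) * cnt (mseq k) n / (mseq k + 1) ≤ (2⁻¹ : ℝ) ^ k := by
  have h1 : (cnt (mseq k) n : ℝ) ≤ (mseq k : ℝ) + 1 := by exact_mod_cast cnt_le (mseq k) n
  have hbb : (bb k : ℝ) = (2⁻¹ : ℝ) ^ k := by rw [bb]; push_cast; norm_num
  rw [div_le_iff₀ (by positivity), hbb]
  calc (2⁻¹:ℝ)^k * (cnt (mseq k) n) ≤ (2⁻¹:ℝ)^k * ((mseq k : ℝ) + 1) := by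
        apply mul_le_mul_of_nonneg_left h1 (by positivity)
    _ = _ := by ring

lemma summable_cseq (n : ℤ) :
    Summable (fun k => (bb k : ℝ) * cnt (mseq k) n / (mseq k + 1)) :=
  Summable.of_nonneg_of_le (cseq_term_nonneg n) (cseq_term_le n)
    (summable_geometric_of_lt_one (by norm_num) (by norm_num))

lemma cseq_nonneg (n : ℤ) : 0 ≤ cseq n :=
  tsum_nonneg (cseq_term_nonneg n)

lemma cseq_ge (n : ℤ) (j : ℕ) : (bb j : ℝ) * cnt (mseq j) n / (mseq j + 1) ≤ cseq n :=
  Summable.le_tsum (summable_cseq n) j (fun k _ => cseq_term_nonneg n k)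

lemma ffun_int (n : ℤ) : ffun ((n : ℤ) : ℂ) = (-1 : ℂ) ^ n * ((cseq n : ℝ) : ℂ) := by
  unfold ffun
  have h1 : (fun ω : ℝ => gfun ω * Complex.exp (Complex.I * ω * ((n : ℤ) : ℂ)))
      = fun ω : ℝ => ∑' k, blk k n ω := by
    funext ω; exact gfun_mul_exp n ω
  rw [h1]
  rw [MeasureTheory.integral_tsum
    (fun k => ((continuous_blk k n).measurable.aestronglyMeasurable))
    (sum_lint_ne_top n)]
  have h2 : ∀ k : ℕ, ∫ ω in Set.Icc (-π : ℝ) π, blk k n ω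
      = (-1 : ℂ) ^ n * ((2 * π : ℝ) : ℂ) *
        (((bb k : ℝ) * cnt (mseq k) n / (mseq k + 1) : ℝ) : ℂ) := by
    intro k
    rw [integral_blk]
    push_cast
    ring
  rw [tsum_congr h2]
  rw [tsum_mul_left, ← Complex.ofReal_tsum]
  rw [show (∑' k, (bb k : ℝ) * cnt (mseq k) n / (mseq k + 1)) = cseq n from rfl]
  rw [show ((1 / (2 * π) : ℝ) : ℂ) * ((-1:ℂ)^n * ((2*π:ℝ):ℂ) * ((cseq n : ℝ):ℂ))
      = (-1:ℂ)^n * ((cseq n : ℝ) : ℂ) * (((1/(2*π) * (2*π) : ℝ)):ℂ) by push_cast; ring]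
  rw [one_div_mul_cancel (by positivity : (2 * π : ℝ) ≠ 0)]
  push_cast
  ring

lemma cos_int_pi (m : ℤ) : Real.cos (m * π) = (-1 : ℝ) ^ m := by
  rcases Int.even_or_odd m with ⟨a, ha⟩ | ⟨a, ha⟩
  · subst ha
    rw [show ((a + a : ℤ) : ℝ) * π = (a : ℝ) * (2 * π) by push_cast; ring]
    rw [show (a : ℝ) * (2 * π) = ((a : ℤ) : ℝ) * (2 * π) by norm_num]
    rw [Real.cos_int_mul_two_pi]
    rw [(Even.neg_one_zpow ⟨a, rfl⟩ : (-1:ℝ) ^ (a + a : ℤ) = 1)]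
  · subst ha
    rw [show ((2 * a + 1 : ℤ) : ℝ) * π = ((a : ℤ) : ℝ) * (2 * π) + π by push_cast; ring]
    rw [Real.cos_int_mul_two_pi_add_pi]
    rw [(Odd.neg_one_zpow ⟨a, rfl⟩ : (-1:ℝ) ^ (2 * a + 1 : ℤ) = -1)]

lemma half_ne (N : ℕ) (n : ℤ) : (N : ℝ) + 1/2 - n ≠ 0 := by
  intro h
  have h2 : (2 * (N : ℤ) + 1 : ℝ) = (2 * n : ℤ) := by push_cast at h ⊢; linarith
  have h3 : 2 * (N : ℤ) + 1 = 2 * n := by exact_mod_cast h2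
  omega

lemma sinc_eval (N : ℕ) (n : ℤ) :
    sincπ ((N : ℝ) + 1/2 - n) = (-1 : ℝ) ^ ((N : ℤ) - n) / (π * ((N : ℝ) + 1/2 - n)) := by
  rw [sincπ, if_neg (half_ne N n)]
  congr 1
  have h1 : π * ((N : ℝ) + 1/2 - n) = (((N : ℤ) - n : ℤ) : ℝ) * π + π / 2 := by
    push_cast; ring
  rw [h1, Real.sin_add_pi_div_two, cos_int_pi]

lemma shannon_eval (N : ℕ) :
    shannonSum ffun N ((N : ℝ) + 1/2)
      = (-1 : ℂ) ^ (N : ℤ) *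
        ((∑ n ∈ Finset.Icc (-(N : ℤ)) (N : ℤ), cseq n / (π * ((N : ℝ) + 1/2 - n)) : ℝ) : ℂ) := by
  unfold shannonSum
  rw [Complex.ofReal_sum, Finset.mul_sum]
  refine Finset.sum_congr rfl fun n _ => ?_
  rw [ffun_int n, sinc_eval N n]
  rw [show (((-1 : ℝ) ^ ((N : ℤ) - n) / (π * ((N : ℝ) + 1/2 - n)) : ℝ) : ℂ)
      = (-1 : ℂ) ^ ((N : ℤ) - n) * (((1 / (π * ((N : ℝ) + 1/2 - n)) : ℝ)) : ℂ) by
    push_cast; ring]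
  rw [show (-1:ℂ)^n * ((cseq n : ℝ):ℂ) * ((-1:ℂ)^((N:ℤ)-n) * ((1/(π * ((N:ℝ)+1/2-n)) : ℝ):ℂ))
      = ((-1:ℂ)^n * (-1:ℂ)^((N:ℤ)-n)) * (((cseq n : ℝ):ℂ) * ((1/(π * ((N:ℝ)+1/2-n)) : ℝ):ℂ)) by
    ring]
  rw [← zpow_add₀ (by norm_num : (-1:ℂ) ≠ 0), show n + ((N:ℤ) - n) = (N:ℤ) by ring]
  push_cast
  ring

lemma shannon_norm (N : ℕ) :
    ‖shannonSum ffun N ((N : ℝ) + 1/2)‖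
      = ∑ n ∈ Finset.Icc (-(N : ℤ)) (N : ℤ), cseq n / (π * ((N : ℝ) + 1/2 - n)) := by
  rw [shannon_eval, norm_mul]
  have h1 : ‖(-1 : ℂ) ^ (N : ℤ)‖ = 1 := by
    rw [norm_zpow, norm_neg, norm_one, one_zpow]
  rw [h1, one_mul, Complex.norm_real]
  apply _root_.abs_of_nonneg
  apply Finset.sum_nonneg
  intro n hn
  simp only [Finset.mem_Icc] at hn
  have hd : 0 < π * ((N : ℝ) + 1/2 - n) := by
    apply mul_pos Real.pi_pos
    have : (n : ℝ) ≤ N := by exact_mod_cast hn.2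
    linarith
  exact div_nonneg (cseq_nonneg n) hd.le

lemma mseq_le_self (N : ℕ) (hN : 2 ≤ N) : mseq (Nat.log 4 (Nat.log 2 N)) ≤ N := by
  have h1 : 1 ≤ Nat.log 2 N := by
    rw [Nat.one_le_iff_ne_zero, Ne, Nat.log_eq_zero_iff]
    omega
  have h2 : 4 ^ (Nat.log 4 (Nat.log 2 N)) ≤ Nat.log 2 N :=
    Nat.pow_log_le_self 4 (by omega)
  calc mseq (Nat.log 4 (Nat.log 2 N)) = 2 ^ (4 ^ (Nat.log 4 (Nat.log 2 N))) := rfl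
    _ ≤ 2 ^ (Nat.log 2 N) := Nat.pow_le_pow_right (by norm_num) h2
    _ ≤ N := Nat.pow_log_le_self 2 (by omega)

lemma two_mul_le_mseq (N : ℕ) (hN : 2 ≤ N) :
    2 * N ≤ mseq (Nat.log 4 (Nat.log 2 N) + 2) := by
  set k := Nat.log 4 (Nat.log 2 N) with hk
  have h1 : N < 2 ^ (Nat.log 2 N + 1) := Nat.lt_pow_succ_log_self (by norm_num) N
  have h2 : Nat.log 2 N < 4 ^ (k + 1) := Nat.lt_pow_succ_log_self (by norm_num) _
  have h3 : Nat.log 2 N + 2 ≤ 4 ^ (k + 2) := by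
    have h4 : (4:ℕ) ^ (k + 2) = 4 * 4 ^ (k + 1) := by ring
    have h5 : 1 ≤ (4:ℕ) ^ (k + 1) := Nat.one_le_pow _ _ (by norm_num)
    omega
  calc 2 * N ≤ 2 * 2 ^ (Nat.log 2 N + 1) := by omega
    _ = 2 ^ (Nat.log 2 N + 2) := by ring
    _ ≤ 2 ^ (4 ^ (k + 2)) := Nat.pow_le_pow_right (by norm_num) h3
    _ = mseq (k + 2) := rfl

lemma cseq_lb (N : ℕ) (hN : 2 ≤ N) (n : ℤ) (h0 : 0 ≤ n) (hn : n ≤ (N : ℤ)) :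
    (2⁻¹ : ℝ) ^ (Nat.log 4 (Nat.log 2 N) + 3) ≤ cseq n := by
  set k := Nat.log 4 (Nat.log 2 N) with hk
  set j := k + 2 with hj
  have hm := two_mul_le_mseq N hN
  rw [← hj] at hm
  have hcnt : mseq j + 1 ≤ 2 * cnt (mseq j) n := by
    have h1 := cnt_ge (mseq j) n h0
    have h2 : n.toNat ≤ N := by omega
    omega
  refine le_trans ?_ (cseq_ge n j)
  have hbb : (bb j : ℝ) = (2⁻¹ : ℝ) ^ j := by rw [bb]; push_cast; norm_num
  rw [hbb]
  have hpos : (0:ℝ) < (mseq j : ℝ) + 1 := by positivity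
  rw [le_div_iff₀ hpos]
  have hcnt' : ((mseq j : ℝ) + 1) ≤ 2 * (cnt (mseq j) n : ℝ) := by exact_mod_cast hcnt
  have hc0 : (0:ℝ) ≤ (cnt (mseq j) n : ℝ) := by positivity
  have hp : (2⁻¹:ℝ) ^ (k+3) = (2⁻¹:ℝ)^j * 2⁻¹ := by rw [hj]; ring
  rw [hp]
  have h2 : (2⁻¹:ℝ)^j * 2⁻¹ * ((mseq j:ℝ)+1) ≤ (2⁻¹:ℝ)^j * ((cnt (mseq j) n : ℝ)) := by
    have hb : (0:ℝ) < (2⁻¹:ℝ)^j := by positivity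
    nlinarith
  exact h2

lemma key_sum (N : ℕ) :
    ∑ n ∈ Finset.Icc (0:ℤ) (N:ℤ), (1:ℝ)/((N:ℝ)+1-n) = (harmonic (N+1) : ℝ) := by
  have h1 : ∑ n ∈ Finset.Icc (0:ℤ) (N:ℤ), (1:ℝ)/((N:ℝ)+1-n)
      = ∑ i ∈ Finset.range (N+1), (1:ℝ)/((N:ℝ)+1-i) := by
    refine Finset.sum_nbij' (fun n => n.toNat) (fun i => (i : ℤ)) ?_ ?_ ?_ ?_ ?_
    · intro a ha
      simp only [Finset.mem_Icc] at ha
      simp only [Finset.mem_range]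
      omega
    · intro a ha
      simp only [Finset.mem_range] at ha
      simp only [Finset.mem_Icc]
      omega
    · intro a ha
      simp only [Finset.mem_Icc] at ha
      show ((a.toNat : ℤ)) = a
      omega
    · intro a _
      simp
    · intro a ha
      simp only [Finset.mem_Icc] at ha
      have h := Int.toNat_of_nonneg ha.1
      show (1:ℝ)/((N:ℝ)+1-a) = 1/((N:ℝ)+1-(a.toNat : ℕ))
      rw [show ((a.toNat : ℕ):ℝ) = (a:ℝ) by exact_mod_cast h]
  rw [h1]
  have h2 := Finset.sum_range_reflect (fun i => (1:ℝ)/((i:ℝ)+1)) (N+1)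
  have h3 : ∀ i ∈ Finset.range (N+1), (1:ℝ)/((N:ℝ)+1-i) = (1:ℝ)/(((N+1-1-i : ℕ):ℝ)+1) := by
    intro i hi
    simp only [Finset.mem_range] at hi
    congr 1
    rw [Nat.cast_sub (by omega)]
    push_cast
    ring
  rw [Finset.sum_congr rfl h3, h2]
  rw [harmonic]
  push_cast
  simp [one_div]

lemma shannon_lower (N : ℕ) (hN : 2 ≤ N) :
    Real.log 2 / (8 * π) * 2 ^ (Nat.log 4 (Nat.log 2 N))
      ≤ ‖shannonSum ffun N ((N : ℝ) + 1/2)‖ := by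
  set k := Nat.log 4 (Nat.log 2 N) with hk
  set c : ℝ := (2⁻¹ : ℝ) ^ (k + 3) with hc
  have hcpos : (0:ℝ) < c := by positivity
  rw [shannon_norm]
  have hterm_nonneg : ∀ n ∈ Finset.Icc (-(N:ℤ)) (N:ℤ),
      0 ≤ cseq n / (π * ((N : ℝ) + 1/2 - n)) := by
    intro n hn
    simp only [Finset.mem_Icc] at hn
    have : (n : ℝ) ≤ N := by exact_mod_cast hn.2
    have hd : 0 < π * ((N : ℝ) + 1/2 - n) := by
      apply mul_pos Real.pi_pos; linarith
    exact div_nonneg (cseq_nonneg n) hd.le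
  have hsub : Finset.Icc (0:ℤ) (N:ℤ) ⊆ Finset.Icc (-(N:ℤ)) (N:ℤ) := by
    intro n hn
    simp only [Finset.mem_Icc] at hn ⊢
    omega
  have h1 : ∑ n ∈ Finset.Icc (0:ℤ) (N:ℤ), cseq n / (π * ((N : ℝ) + 1/2 - n))
      ≤ ∑ n ∈ Finset.Icc (-(N:ℤ)) (N:ℤ), cseq n / (π * ((N : ℝ) + 1/2 - n)) :=
    Finset.sum_le_sum_of_subset_of_nonneg hsub (fun n hn _ => hterm_nonneg n hn)
  refine le_trans ?_ h1
  have h2 : ∀ n ∈ Finset.Icc (0:ℤ) (N:ℤ),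
      c / π * ((1:ℝ) / ((N:ℝ) + 1 - n)) ≤ cseq n / (π * ((N : ℝ) + 1/2 - n)) := by
    intro n hn
    simp only [Finset.mem_Icc] at hn
    have hnN : (n : ℝ) ≤ N := by exact_mod_cast hn.2
    have hd1 : 0 < π * ((N : ℝ) + 1/2 - n) := mul_pos Real.pi_pos (by linarith)
    have hd2 : π * ((N : ℝ) + 1/2 - n) ≤ π * ((N:ℝ) + 1 - n) :=
      mul_le_mul_of_nonneg_left (by linarith) Real.pi_pos.le
    have hcle := cseq_lb N hN n hn.1 hn.2
    calc c / π * ((1:ℝ) / ((N:ℝ) + 1 - n)) = c / (π * ((N:ℝ) + 1 - n)) := by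
          rw [div_mul_div_comm, mul_one]
      _ ≤ cseq n / (π * ((N : ℝ) + 1/2 - n)) :=
          div_le_div₀ (cseq_nonneg n) hcle hd1 hd2
  refine le_trans ?_ (Finset.sum_le_sum h2)
  rw [← Finset.mul_sum, key_sum]
  have h3 : Real.log (mseq k) ≤ (harmonic (N+1) : ℝ) := by
    refine le_trans ?_ (log_add_one_le_harmonic (N+1))
    apply Real.log_le_log (by exact_mod_cast (show 0 < mseq k from by rw [mseq]; exact pow_pos (by norm_num) _))
    push_cast
    have := mseq_le_self N hN
    rw [← hk] at this
    exact_mod_cast (by omega : (mseq k) ≤ N + 1 + 1)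
  have h4 : Real.log (mseq k) = 4 ^ k * Real.log 2 := by
    rw [show ((mseq k : ℕ) : ℝ) = (2:ℝ) ^ (4^k) by rw [mseq]; push_cast; ring]
    rw [Real.log_pow]
    push_cast
    ring
  have hlog2 : (0:ℝ) < Real.log 2 := Real.log_pos (by norm_num)
  calc Real.log 2 / (8 * π) * 2 ^ k = c / π * (4 ^ k * Real.log 2) := by
        rw [hc]
        have h5 : (4:ℝ)^k = 2^k * 2^k := by rw [← mul_pow]; norm_num
        have h6 : (2⁻¹:ℝ)^(k+3) = ((2:ℝ)^k)⁻¹ * 8⁻¹ := by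
          rw [pow_add, inv_pow]
          norm_num
        rw [h5, h6]
        have hp : (0:ℝ) < (2:ℝ)^k := by positivity
        field_simp
    _ ≤ c / π * (harmonic (N+1) : ℝ) := by
        apply mul_le_mul_of_nonneg_left _ (div_nonneg hcpos.le Real.pi_pos.le)
        rw [← h4]
        exact h3

/-- The Shannon sampling series diverges strongly on `PW^1_π`:
there is `f₁ ∈ PW^1_π` with `lim_{N→∞} sup_{t∈ℝ} |(S_N f₁)(t)| = ∞` (the full
limit, not merely the limsup). -/
theorem shannon_strong_divergence_PW1 :
    ∃ f₁ : ℂ → ℂ, IsPW 1 π f₁ ∧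
      Tendsto (fun N : ℕ => ⨆ t : ℝ, (‖shannonSum f₁ N t‖₊ : ℝ≥0∞)) atTop (𝓝 ⊤) := by
  refine ⟨ffun, ⟨gfun, memLp_one_iff_integrable.mpr integrable_gfun, fun z => rfl⟩, ?_⟩
  rw [ENNReal.tendsto_nhds_top_iff_nnreal]
  intro r
  have hlog2 : (0:ℝ) < Real.log 2 := Real.log_pos (by norm_num)
  have hconst : (0:ℝ) < Real.log 2 / (8 * π) := by positivity
  obtain ⟨K, hK⟩ := pow_unbounded_of_one_lt ((r : ℝ) / (Real.log 2 / (8 * π)))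
    (by norm_num : (1:ℝ) < 2)
  have hK' : (r : ℝ) < Real.log 2 / (8 * π) * 2 ^ K := by
    rw [div_lt_iff₀ hconst] at hK
    linarith
  filter_upwards [eventually_ge_atTop (max 2 (2 ^ 4 ^ K))] with N hN
  have hN2 : 2 ≤ N := le_trans (le_max_left _ _) hN
  have hNK : 2 ^ 4 ^ K ≤ N := le_trans (le_max_right _ _) hN
  set k := Nat.log 4 (Nat.log 2 N) with hk
  have hk1 : 4 ^ K ≤ Nat.log 2 N := by
    rw [Nat.le_log_iff_pow_le (by norm_num) (by omega)]
    exact hNK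
  have hk2 : K ≤ k := by
    rw [hk, Nat.le_log_iff_pow_le (by norm_num)]
    · exact hk1
    · have : 1 ≤ 4 ^ K := Nat.one_le_pow _ _ (by norm_num)
      omega
  have hmono : Real.log 2 / (8 * π) * 2 ^ K ≤ Real.log 2 / (8 * π) * 2 ^ k := by
    apply mul_le_mul_of_nonneg_left _ hconst.le
    exact pow_le_pow_right₀ (by norm_num) hk2
  have hlb := shannon_lower N hN2
  rw [← hk] at hlb
  have hpos2 : (0:ℝ) < Real.log 2 / (8 * π) * 2 ^ K := by positivity
  have h1 : (r : ℝ≥0∞) < ENNReal.ofReal (‖shannonSum ffun N ((N : ℝ) + 1/2)‖) := by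
    rw [← ENNReal.ofReal_coe_nnreal]
    rw [ENNReal.ofReal_lt_ofReal_iff (by linarith)]
    linarith
  calc (r : ℝ≥0∞) < ENNReal.ofReal (‖shannonSum ffun N ((N : ℝ) + 1/2)‖) := h1
    _ = (‖shannonSum ffun N ((N : ℝ) + 1/2)‖₊ : ℝ≥0∞) := ofReal_norm _
    _ ≤ ⨆ t : ℝ, (‖shannonSum ffun N t‖₊ : ℝ≥0∞) :=
        le_iSup (fun t : ℝ => (‖shannonSum ffun N t‖₊ : ℝ≥0∞)) ((N : ℝ) + 1/2)
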